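/- Let β, γ, x₀, y₀ > 0 with z₀ ≥ 0 and x₀ + y₀ + z₀ = 1, and suppose v: ℝ≥0 → (v*, 1] is differentiable and satisfies v(0) = 1 and v'(t) = -β·v(t)·(x₀(1 - v(t)) + y₀ + (γ/β)·log v(t)). Then the functions x(t) = x₀·v(t), y(t) = (γ/β)·log v(t) - x₀·v(t) + x₀ + y₀, z(t) = -(γ/β)·log v(t) + z₀ satisfy the SIR system ẋ = -βxy, ẏ = βxy - γy, ż = γy with initial conditions x(0)=x₀, y(0)=y₀, z(0)=z₀. -/

import Mathlib

theorem stmt_8 (β γ x₀ y₀ z₀ vstar : ℝ) (hβ : 0 < β) (hγ : 0 < γ)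
    (hx₀ : 0 < x₀) (hy₀ : 0 < y₀) (hz₀ : 0 ≤ z₀) (hsum : x₀ + y₀ + z₀ = 1)
    (hvstar : vstar ∈ Set.Ioo (0 : ℝ) 1)
    (hroot : x₀ * (1 - vstar) + y₀ + (γ / β) * Real.log vstar = 0)
    (v : ℝ → ℝ) (hv0 : v 0 = 1)
    (hvmem : ∀ t : ℝ, 0 ≤ t → v t ∈ Set.Ioc vstar 1)
    (hv : ∀ t : ℝ, 0 ≤ t →
      HasDerivAt v (-(β * v t * (x₀ * (1 - v t) + y₀ + (γ / β) * Real.log (v t)))) t)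
    (x y z : ℝ → ℝ)
    (hx : ∀ t, x t = x₀ * v t)
    (hy : ∀ t, y t = (γ / β) * Real.log (v t) - x₀ * v t + x₀ + y₀)
    (hz : ∀ t, z t = -(γ / β) * Real.log (v t) + z₀) :
    x 0 = x₀ ∧ y 0 = y₀ ∧ z 0 = z₀ ∧
    (∀ t : ℝ, 0 ≤ t → HasDerivAt x (-(β * x t * y t)) t) ∧
    (∀ t : ℝ, 0 ≤ t → HasDerivAt y (β * x t * y t - γ * y t) t) ∧
    (∀ t : ℝ, 0 ≤ t → HasDerivAt z (γ * y t) t) := by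
  have key : ∀ t : ℝ, 0 ≤ t → 0 < v t := fun t ht => hvstar.1.trans (hvmem t ht).1
  have hx' : x = fun s => x₀ * v s := funext hx
  have hy' : y = fun s => (γ / β) * Real.log (v s) - x₀ * v s + x₀ + y₀ := funext hy
  have hz' : z = fun s => -(γ / β) * Real.log (v s) + z₀ := funext hz
  refine ⟨by simp [hx, hv0], by simp [hy, hv0], by simp [hz, hv0], ?_, ?_, ?_⟩
  · intro t ht
    have hvt := key t ht
    have hd := hv t ht
    have hE : y t = x₀ * (1 - v t) + y₀ + γ / β * Real.log (v t) := by rw [hy]; ring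
    rw [hx']
    convert hd.const_mul x₀ using 1
    · rfl
    · rfl
    simp only [hx, hy]
    ring
  · intro t ht
    have hvt := key t ht
    have hd := hv t ht
    have hE : y t = x₀ * (1 - v t) + y₀ + γ / β * Real.log (v t) := by rw [hy]; ring
    have hlog : HasDerivAt (fun s => Real.log (v s))
        ((v t)⁻¹ * (-(β * v t * (x₀ * (1 - v t) + y₀ + (γ / β) * Real.log (v t))))) t :=
      (Real.hasDerivAt_log hvt.ne').comp t hd
    rw [hy']
    convert (((hlog.const_mul (γ / β)).sub (hd.const_mul x₀)).add_const x₀).add_const y₀ using 1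
    · rfl
    · rfl
    · rfl
    simp only [hx, hy]
    field_simp
    ring
  · intro t ht
    have hvt := key t ht
    have hd := hv t ht
    have hE : y t = x₀ * (1 - v t) + y₀ + γ / β * Real.log (v t) := by rw [hy]; ring
    have hlog : HasDerivAt (fun s => Real.log (v s))
        ((v t)⁻¹ * (-(β * v t * (x₀ * (1 - v t) + y₀ + (γ / β) * Real.log (v t))))) t :=
      (Real.hasDerivAt_log hvt.ne').comp t hd
    rw [hz']
    convert (hlog.const_mul (-(γ / β))).add_const z₀ using 1
    · rfl
    · rfl
    simp only [hy]
    field_simp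
    ring
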